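/- A (δ,𝔾)-NCLE exists if and only if there exists a valid ICSIE encoding of codelength |E| for the corresponding index coding instance of (𝔾,δ). -/

import Mathlib

open Finset

/-- Restriction of a vector to the coordinates in a finite index set. -/
def proj {ι 𝔽 : Type*} (A : Finset ι) (x : ι → 𝔽) : {a // a ∈ A} → 𝔽 :=
  fun a => x a.1

/-- The input index set `In(e)` of a link `e`: the source messages assigned to
`tail e` if `tail e` is a source node, and the incoming links of `tail e`
otherwise. -/
def linkIn {V E S : Type*} [Fintype E] [Fintype S] [DecidableEq V]
    [DecidableEq S] [DecidableEq E]
    (tail head : E → V) (Sbar : Finset V) (assign : S → V) (e : E) :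
    Finset (S ⊕ E) :=
  if tail e ∈ Sbar then
    (Finset.univ.filter fun s : S => assign s = tail e).image Sum.inl
  else
    (Finset.univ.filter fun e' : E => head e' = tail e).image Sum.inr

lemma inr_mem_linkIn {V E S : Type*} [Fintype E] [Fintype S] [DecidableEq V]
    [DecidableEq S] [DecidableEq E]
    (tail head : E → V) (Sbar : Finset V) (assign : S → V) {e e' : E}
    (h : Sum.inr e' ∈ linkIn tail head Sbar assign e) : head e' = tail e := by
  unfold linkIn at h
  split at h
  · simp at h
  · simpa using h

lemma hammingDist_sub_right {ι 𝔽 : Type*} [Fintype ι] [DecidableEq 𝔽] [AddGroup 𝔽]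
    (f g h : ι → 𝔽) :
    hammingDist (fun i => f i - h i) (fun i => g i - h i) = hammingDist f g := by
  simp [hammingDist, sub_left_inj]

def consExt {V E S 𝔽 : Type*} [Fintype E] [Fintype S] [DecidableEq V]
    [DecidableEq S] [DecidableEq E]
    (tail head : E → V) (Sbar : Finset V) (assign : S → V)
    (Fenc : (e : E) → ({a // a ∈ linkIn tail head Sbar assign e} → 𝔽) → 𝔽)
    (ord : V → ℕ) (hord : ∀ e : E, ord (tail e) < ord (head e))
    (xs : S → 𝔽) (e : E) : 𝔽 :=
  Fenc e (fun a =>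
    match a with
    | ⟨Sum.inl s, _⟩ => xs s
    | ⟨Sum.inr e', _h⟩ => consExt tail head Sbar assign Fenc ord hord xs e')
termination_by ord (head e)
decreasing_by
  have h1 : head e' = tail e := inr_mem_linkIn tail head Sbar assign _h
  rw [h1]; exact hord e

lemma consExt_consistent {V E S 𝔽 : Type*} [Fintype E] [Fintype S] [DecidableEq V]
    [DecidableEq S] [DecidableEq E]
    (tail head : E → V) (Sbar : Finset V) (assign : S → V)
    (Fenc : (e : E) → ({a // a ∈ linkIn tail head Sbar assign e} → 𝔽) → 𝔽)
    (ord : V → ℕ) (hord : ∀ e : E, ord (tail e) < ord (head e))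
    (xs : S → 𝔽) (e : E) :
    Sum.elim xs (consExt tail head Sbar assign Fenc ord hord xs) (Sum.inr e)
      = Fenc e (proj (linkIn tail head Sbar assign e)
          (Sum.elim xs (consExt tail head Sbar assign Fenc ord hord xs))) := by
  show consExt tail head Sbar assign Fenc ord hord xs e = _
  rw [consExt.eq_def]
  congr 1
  funext a
  rcases a with ⟨i, hi⟩
  cases i <;> rfl

lemma consistent_congr {V E S 𝔽 : Type*} [Fintype E] [Fintype S] [DecidableEq V]
    [DecidableEq S] [DecidableEq E]
    (tail head : E → V) (Sbar : Finset V) (assign : S → V)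
    (Fenc : (e : E) → ({a // a ∈ linkIn tail head Sbar assign e} → 𝔽) → 𝔽)
    (ord : V → ℕ) (hord : ∀ e : E, ord (tail e) < ord (head e))
    (x x' : S ⊕ E → 𝔽)
    (hx : ∀ e, x (Sum.inr e) = Fenc e (proj (linkIn tail head Sbar assign e) x))
    (hx' : ∀ e, x' (Sum.inr e) = Fenc e (proj (linkIn tail head Sbar assign e) x'))
    (hs : ∀ s, x (Sum.inl s) = x' (Sum.inl s)) :
    ∀ e, x (Sum.inr e) = x' (Sum.inr e) := by
  have key : ∀ n, ∀ e : E, ord (head e) ≤ n → x (Sum.inr e) = x' (Sum.inr e) := by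
    intro n
    induction n with
    | zero => intro e he; have := hord e; omega
    | succ n ih =>
      intro e he
      rw [hx e, hx' e]
      congr 1
      funext a
      rcases a with ⟨i, hi⟩
      cases i with
      | inl s => exact hs s
      | inr e' =>
        have h1 : head e' = tail e := inr_mem_linkIn tail head Sbar assign hi
        apply ih
        have h2 := hord e
        rw [h1]
        omega
  intro e; exact key _ e le_rfl

/-- The input index set `In(t)` of a terminal `t`: its incoming links. -/
def termIn {V E S : Type*} [Fintype E] [DecidableEq V] [DecidableEq S] [DecidableEq E]
    (head : E → V) (t : V) : Finset (S ⊕ E) :=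
  (Finset.univ.filter fun e' : E => head e' = t).image Sum.inr

/-- `(Fenc, Ddec)` is a (δ,𝔾)-NCLE (with input sets `In_`, `InT_`):
for every consistent assignment `x` of message and link symbols, every link
encoder outputs the correct link symbol from inputs with at most `δE e` symbol
errors, and every terminal decoder outputs its demanded source symbols from
inputs with at most `δT t` symbol errors. -/
def IsNCLE (𝔽 : Type*) [DecidableEq 𝔽] {V E S : Type*}
    (In_ : E → Finset (S ⊕ E)) (InT_ : V → Finset (S ⊕ E))
    (Term : Finset V) (Fdem : V → Finset S) (δE : E → ℕ) (δT : V → ℕ)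
    (Fenc : (e : E) → ({a // a ∈ In_ e} → 𝔽) → 𝔽)
    (Ddec : (t : {v // v ∈ Term}) → ({a // a ∈ InT_ t.1} → 𝔽) →
      ({s // s ∈ Fdem t.1} → 𝔽)) : Prop :=
  ∀ x : S ⊕ E → 𝔽, (∀ e : E, x (Sum.inr e) = Fenc e (proj (In_ e) x)) →
    (∀ (e : E) (yt : {a // a ∈ In_ e} → 𝔽),
        hammingDist (proj (In_ e) x) yt ≤ δE e → Fenc e yt = x (Sum.inr e)) ∧
    (∀ (t : {v // v ∈ Term}) (yt : {a // a ∈ InT_ t.1} → 𝔽),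
        hammingDist (proj (InT_ t.1) x) yt ≤ δT t.1 →
        Ddec t yt = fun s : {s // s ∈ Fdem t.1} => x (Sum.inl s.1))

/-- `enc` is a valid (δ,𝒢)-ICSIE encoding: decoders exist recovering the wanted
messages from the codeword and side information with at most `δ r` errors. -/
def ValidEnc (𝔽 : Type*) [DecidableEq 𝔽] {ι R C : Type*}
    (X f : R → Finset ι) (δ : R → ℕ) (enc : (ι → 𝔽) → C) : Prop :=
  ∃ D : (r : R) → C → ({a // a ∈ X r} → 𝔽) → ({a // a ∈ f r} → 𝔽),
    ∀ (r : R) (x : ι → 𝔽) (xt : {a // a ∈ X r} → 𝔽),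
      hammingDist (proj (X r) x) xt ≤ δ r → D r (enc x) xt = proj (f r) x

/-- a (δ,𝔾)-NCLE exists iff a valid ICSIE encoding of codelength
`|E|` exists for the corresponding index coding instance of (𝔾,δ). -/
theorem NCLE_iff_ICSIE
    {𝔽 : Type*} [Field 𝔽] [Fintype 𝔽] [DecidableEq 𝔽]
    {V E S : Type*} [Fintype V] [Fintype E] [Fintype S]
    [DecidableEq V] [DecidableEq E] [DecidableEq S]
    (tail head : E → V) (Sbar : Finset V) (assign : S → V)
    (Term : Finset V) (Fdem : V → Finset S) (δE : E → ℕ) (δT : V → ℕ)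
    (hord : ∃ ord : V → ℕ, ∀ e : E, ord (tail e) < ord (head e))
    (hsrc : ∀ e : E, head e ∉ Sbar)
    (hassign : ∀ s : S, assign s ∈ Sbar)
    (hterm : ∀ e : E, tail e ∉ Term) :
    (∃ (Fenc : (e : E) → ({a // a ∈ linkIn tail head Sbar assign e} → 𝔽) → 𝔽)
        (Ddec : (t : {v // v ∈ Term}) → ({a // a ∈ termIn (S := S) head t.1} → 𝔽) →
          ({s // s ∈ Fdem t.1} → 𝔽)),
        IsNCLE 𝔽 (linkIn tail head Sbar assign) (termIn head) Term Fdem δE δT Fenc Ddec)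
    ↔ (∃ enc : (S ⊕ E → 𝔽) → (E → 𝔽),
        ValidEnc 𝔽
          (Sum.elim (linkIn tail head Sbar assign)
            (fun t : {v // v ∈ Term} => termIn head t.1))
          (Sum.elim (fun e : E => ({Sum.inr e} : Finset (S ⊕ E)))
            (fun t : {v // v ∈ Term} => (Fdem t.1).image Sum.inl))
          (Sum.elim δE (fun t : {v // v ∈ Term} => δT t.1)) enc) := by
  obtain ⟨ord, hord'⟩ := hord
  constructor
  · rintro ⟨Fenc, Ddec, hN⟩
    refine ⟨fun x e => x (Sum.inr e) -
      consExt tail head Sbar assign Fenc ord hord' (fun s => x (Sum.inl s)) e, ?_⟩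
    refine ⟨fun r => match r with
      | Sum.inl e => fun y xt => fun _ =>
          y e + Fenc e (fun b => xt b - Sum.elim (fun _ => (0:𝔽)) y b.1)
      | Sum.inr t => fun y xt => fun a =>
          match a with
          | ⟨Sum.inl s, h⟩ =>
              Ddec t (fun b => xt b - Sum.elim (fun _ => (0:𝔽)) y b.1) ⟨s, by simpa using h⟩
          | ⟨Sum.inr _, _⟩ => 0, ?_⟩
    intro r x xt hdist
    set xs : S → 𝔽 := fun s => x (Sum.inl s) with hxs
    set z : E → 𝔽 := consExt tail head Sbar assign Fenc ord hord' xs with hzdef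
    set x' : S ⊕ E → 𝔽 := Sum.elim xs z with hx'
    have hcons : ∀ e, x' (Sum.inr e) = Fenc e (proj (linkIn tail head Sbar assign e) x') :=
      fun e => consExt_consistent tail head Sbar assign Fenc ord hord' xs e
    obtain ⟨hE, hT⟩ := hN x' hcons
    set y : E → 𝔽 := fun e => x (Sum.inr e) - z e with hy
    have hproj : ∀ A : Finset (S ⊕ E),
        proj A x' = fun b : {a // a ∈ A} => proj A x b - Sum.elim (fun _ => (0:𝔽)) y b.1 := by
      intro A; funext b; rcases b with ⟨i, hi⟩
      cases i with
      | inl s => simp [proj, hx', hxs]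
      | inr e => simp [proj, hx', hy]
    match r with
    | Sum.inl e =>
      funext a
      rcases a with ⟨i, hi⟩
      have hieq : i = Sum.inr e := by simpa using hi
      subst hieq
      show y e + Fenc e (fun b => xt b - Sum.elim (fun _ => (0:𝔽)) y b.1) = x (Sum.inr e)
      have hd : hammingDist (proj (linkIn tail head Sbar assign e) x')
          (fun b => xt b - Sum.elim (fun _ => (0:𝔽)) y b.1) ≤ δE e := by
        rw [hproj]
        exact (hammingDist_sub_right (proj (linkIn tail head Sbar assign e) x) xt
          (fun b => Sum.elim (fun _ => (0:𝔽)) y b.1)).trans_le hdist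
      rw [hE e _ hd]
      show y e + z e = x (Sum.inr e)
      rw [hy]; ring
    | Sum.inr t =>
      funext a
      rcases a with ⟨i, hi⟩
      cases i with
      | inr e => exact absurd hi (by simp)
      | inl s =>
        have hd : hammingDist (proj (termIn head t.1) x')
            (fun b => xt b - Sum.elim (fun _ => (0:𝔽)) y b.1) ≤ δT t.1 := by
          rw [hproj]
          exact (hammingDist_sub_right (proj (termIn head t.1) x) xt
            (fun b => Sum.elim (fun _ => (0:𝔽)) y b.1)).trans_le hdist
        show Ddec t (fun b => xt b - Sum.elim (fun _ => (0:𝔽)) y b.1) ⟨s, by simpa using hi⟩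
          = proj _ x ⟨Sum.inl s, hi⟩
        rw [hT t _ hd]
        rfl
  · rintro ⟨enc, D, hD⟩
    refine ⟨fun e w => D (Sum.inl e) 0 w ⟨Sum.inr e, Finset.mem_singleton_self _⟩,
            fun t w => fun s => D (Sum.inr t) 0 w ⟨Sum.inl s.1, Finset.mem_image_of_mem _ s.2⟩, ?_⟩
    intro x hx
    set xs : S → 𝔽 := fun s => x (Sum.inl s) with hxs
    have hinj : Function.Injective (fun xE : E → 𝔽 => enc (Sum.elim xs xE)) := by
      intro a b hab
      simp only at hab
      funext e
      have key := consistent_congr tail head Sbar assign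
        (fun e w => D (Sum.inl e) (enc (Sum.elim xs a)) w ⟨Sum.inr e, Finset.mem_singleton_self _⟩)
        ord hord' (Sum.elim xs a) (Sum.elim xs b) ?_ ?_ (fun s => rfl)
      · exact key e
      · intro e'
        have h0 := hD (Sum.inl e') (Sum.elim xs a) (proj _ (Sum.elim xs a)) (by exact (hammingDist_self _).trans_le (Nat.zero_le _))
        exact (congrFun h0 ⟨Sum.inr e', Finset.mem_singleton_self _⟩).symm
      · intro e'
        have h0 := hD (Sum.inl e') (Sum.elim xs b) (proj _ (Sum.elim xs b)) (by exact (hammingDist_self _).trans_le (Nat.zero_le _))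
        rw [← hab] at h0
        exact (congrFun h0 ⟨Sum.inr e', Finset.mem_singleton_self _⟩).symm
    obtain ⟨zE, hzE⟩ := Finite.surjective_of_injective hinj 0
    simp only at hzE
    have hxx' : ∀ e, x (Sum.inr e) = Sum.elim xs zE (Sum.inr e) := by
      refine consistent_congr tail head Sbar assign
        (fun e w => D (Sum.inl e) 0 w ⟨Sum.inr e, Finset.mem_singleton_self _⟩) ord hord'
        x (Sum.elim xs zE) hx ?_ (fun s => rfl)
      intro e
      have h0 := hD (Sum.inl e) (Sum.elim xs zE) (proj _ (Sum.elim xs zE)) (by exact (hammingDist_self _).trans_le (Nat.zero_le _))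
      rw [hzE] at h0
      exact (congrFun h0 ⟨Sum.inr e, Finset.mem_singleton_self _⟩).symm
    have hencx : enc x = 0 := by
      have hxeq : x = Sum.elim xs zE := by
        funext i
        cases i with
        | inl s => rfl
        | inr e => exact hxx' e
      rw [hxeq]; exact hzE
    constructor
    · intro e yt hdist
      have h1 := hD (Sum.inl e) x yt hdist
      rw [hencx] at h1
      exact congrFun h1 ⟨Sum.inr e, Finset.mem_singleton_self _⟩
    · intro t yt hdist
      have h1 := hD (Sum.inr t) x yt hdist
      rw [hencx] at h1
      funext s
      exact congrFun h1 ⟨Sum.inl s.1, Finset.mem_image_of_mem _ s.2⟩
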